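/- Let G be a topological group whose identity element has a neighbourhood basis consisting of compact open subgroups, let V be a complex Banach space, and let π : G →* (V →L[ℂ] V) be a monoid homomorphism such that for every v ∈ V the orbit map g ↦ π(g)v is continuous. Let V₀ ⊆ V be a closed linear subspace with V₀ ≠ {0} that is G-invariant (π(g)v ∈ V₀ for all g ∈ G, v ∈ V₀). Then there exist a compact open subgroup U ≤ G and a nonzero vector u ∈ V₀ with π(k)u = u for all k ∈ U. -/

import Mathlib

open MeasureTheory TopologicalSpace

theorem stmt_8 (G : Type*) [Group G] [TopologicalSpace G] [IsTopologicalGroup G]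
    (hbasis : ∀ U ∈ nhds (1 : G), ∃ H : Subgroup G,
      IsCompact (H : Set G) ∧ IsOpen (H : Set G) ∧ (H : Set G) ⊆ U)
    (V : Type*) [NormedAddCommGroup V] [NormedSpace ℂ V] [CompleteSpace V]
    (π : G →* (V →L[ℂ] V))
    (hcont : ∀ v : V, Continuous fun g : G => π g v)
    (V₀ : Submodule ℂ V) (hclosed : IsClosed (V₀ : Set V)) (hne : V₀ ≠ ⊥)
    (hinv : ∀ g : G, ∀ v ∈ V₀, π g v ∈ V₀) :
    ∃ U : Subgroup G, IsCompact (U : Set G) ∧ IsOpen (U : Set G) ∧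
      ∃ u ∈ V₀, u ≠ 0 ∧ ∀ k ∈ U, π k u = u := by
  obtain ⟨v, hvV₀, hv0⟩ : ∃ v ∈ V₀, v ≠ 0 := by
    simpa [Submodule.ne_bot_iff] using hne
  have hnv : (0 : ℝ) < ‖v‖ := norm_pos_iff.mpr hv0
  have hopen : {g : G | ‖π g v - v‖ < ‖v‖ / 2} ∈ nhds (1 : G) := by
    have hc : Continuous fun g : G => ‖π g v - v‖ :=
      ((hcont v).sub continuous_const).norm
    have : IsOpen {g : G | ‖π g v - v‖ < ‖v‖ / 2} :=
      isOpen_lt hc continuous_const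
    refine this.mem_nhds ?_
    simp only [Set.mem_setOf_eq, map_one, ContinuousLinearMap.one_apply, sub_self, norm_zero]
    linarith
  obtain ⟨H, hHc, hHo, hHsub⟩ := hbasis _ hopen
  refine ⟨H, hHc, hHo, ?_⟩
  letI : MeasurableSpace H := borel H
  haveI : BorelSpace H := ⟨rfl⟩
  haveI : CompactSpace H := isCompact_iff_compactSpace.mp hHc
  haveI : Nonempty H := ⟨1⟩
  set μ : Measure H := Measure.haarMeasure (⊤ : PositiveCompacts H) with hμ
  haveI : IsProbabilityMeasure μ := ⟨by
    rw [← PositiveCompacts.coe_top (α := H)]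
    exact Measure.haarMeasure_self⟩
  haveI : CompleteSpace V₀ := hclosed.completeSpace_coe
  -- the orbit map on H, valued in V₀
  set f : H → V₀ := fun k => ⟨π (k : G) v, hinv (k : G) v hvV₀⟩ with hf
  have hfc : Continuous f := by
    apply Continuous.subtype_mk
    exact (hcont v).comp continuous_subtype_val
  have hfint : Integrable f μ :=
    hfc.integrable_of_hasCompactSupport ((isClosed_tsupport _).isCompact)
  -- the averaged vector
  set u : V := ∫ k : H, π (k : G) v ∂μ with hu
  have hcoe : (fun k : H => π (k : G) v) = fun k : H => (V₀.subtypeL (f k) : V) := rfl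
  have humem : u ∈ V₀ := by
    rw [hu, hcoe, ContinuousLinearMap.integral_comp_comm _ hfint]
    exact (∫ k : H, f k ∂μ).2
  have hπint : Integrable (fun k : H => π (k : G) v) μ := by
    rw [hcoe]
    exact (V₀.subtypeL.integrable_comp hfint)
  -- u is close to v
  have hdiff : ‖u - v‖ ≤ ‖v‖ / 2 := by
    have hconst : (∫ _ : H, v ∂μ) = v := by simp
    have : u - v = ∫ k : H, (π (k : G) v - v) ∂μ := by
      rw [integral_sub hπint (integrable_const v), hconst]
    have hb : ∀ᵐ (k : H) ∂μ, ‖π (k : G) v - v‖ ≤ ‖v‖ / 2 := by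
      filter_upwards with k
      exact le_of_lt (hHsub k.2)
    have hle := norm_integral_le_of_norm_le_const (μ := μ)
      (f := fun k : H => π (k : G) v - v) hb
    rw [this]
    simpa using hle
  have hu0 : u ≠ 0 := by
    intro h
    rw [h, zero_sub, norm_neg] at hdiff
    linarith
  refine ⟨u, humem, hu0, ?_⟩
  intro k hk
  have hπk : π k u = ∫ j : H, π k (π (j : G) v) ∂μ :=
    ((π k).integral_comp_comm hπint).symm
  rw [hπk]
  have : (fun j : H => π k (π (j : G) v)) = fun j : H => π ((⟨k, hk⟩ * j : H) : G) v := by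
    funext j
    simp [mul_comm, map_mul]
  rw [this, hu]
  exact integral_mul_left_eq_self (fun j : H => π (j : G) v) ⟨k, hk⟩
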